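/- Let X be a Hilbert space, E ∈ L(X) non-negative self-adjoint, A: D(A) ⊆ X → X dissipative, and suppose there exists ω > 0 with (ω,∞) ⊆ ρ(E,A). Then there exist K > 0 and μ > ω such that ‖(λE−A)⁻¹‖ ≤ K λ for all real λ > μ; that is, the resolvent index of (E,A) is at most 2. -/

import Mathlib

open scoped InnerProductSpace

lemma aux_norm_sq_le {X : Type*} [NormedAddCommGroup X] [InnerProductSpace ℂ X]
    [CompleteSpace X]
    (T : X →L[ℂ] X) (hT : IsSelfAdjoint T) (hnn : ∀ x : X, 0 ≤ (⟪x, T x⟫_ℂ).re) (x : X) :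
    ‖T x‖ ^ 2 ≤ ‖T‖ * (⟪x, T x⟫_ℂ).re := by
  have hsym : ∀ u v : X, ⟪T u, v⟫_ℂ = ⟪u, T v⟫_ℂ :=
    fun u v => (ContinuousLinearMap.isSelfAdjoint_iff_isSymmetric.mp hT) u v
  rcases eq_or_lt_of_le (norm_nonneg T) with h0 | hpos
  · have : T = 0 := by
      rw [← norm_eq_zero]; exact h0.symm
    simp [this]
  set t : ℝ := 1 / ‖T‖ with ht
  have ht0 : 0 < t := by positivity
  have key := hnn (x - (t : ℂ) • T x)
  have expand : ⟪x - (t : ℂ) • T x, T (x - (t : ℂ) • T x)⟫_ℂ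
      = ⟪x, T x⟫_ℂ - (t : ℂ) * ⟪T x, T x⟫_ℂ - (t : ℂ) * ⟪T x, T x⟫_ℂ
        + (t : ℂ) * ((t : ℂ) * ⟪T x, T (T x)⟫_ℂ) := by
    rw [map_sub, map_smul]
    rw [inner_sub_left, inner_sub_right, inner_sub_right, inner_smul_left, inner_smul_right,
      inner_smul_left, inner_smul_right, hsym x (T x)]
    simp [Complex.conj_ofReal]
    ring
  rw [expand] at key
  simp only [Complex.sub_re, Complex.add_re, Complex.re_ofReal_mul] at key
  have hTT : (⟪T x, T x⟫_ℂ).re = ‖T x‖ ^ 2 := by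
    simpa using inner_self_eq_norm_sq (𝕜 := ℂ) (T x)
  rw [hTT] at key
  have hbd : (⟪T x, T (T x)⟫_ℂ).re ≤ ‖T‖ * ‖T x‖ ^ 2 := by
    calc (⟪T x, T (T x)⟫_ℂ).re ≤ ‖T x‖ * ‖T (T x)‖ := by simpa using re_inner_le_norm (𝕜 := ℂ) (T x) (T (T x))
    _ ≤ ‖T x‖ * (‖T‖ * ‖T x‖) := by
        have := T.le_opNorm (T x)
        nlinarith [norm_nonneg (T x)]
    _ = ‖T‖ * ‖T x‖ ^ 2 := by ring
  have htN : t * ‖T‖ = 1 := by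
    rw [ht]; exact one_div_mul_cancel hpos.ne'
  have h5 : t * ‖T x‖ ^ 2 ≤ (⟪x, T x⟫_ℂ).re := by
    have htN2 : t * t * ‖T‖ = t := by rw [mul_assoc, htN, mul_one]
    nlinarith [key, mul_le_mul_of_nonneg_left hbd (by positivity : (0:ℝ) ≤ t * t), htN2, ht0, sq_nonneg (‖T x‖)]
  calc ‖T x‖ ^ 2 = ‖T‖ * (t * ‖T x‖ ^ 2) := by
        rw [← mul_assoc, mul_comm ‖T‖ t, htN, one_mul]
  _ ≤ ‖T‖ * (⟪x, T x⟫_ℂ).re := by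
        exact mul_le_mul_of_nonneg_left h5 hpos.le


/-- `R` is the bounded (two-sided) inverse of `λ E - A`. -/
def IsDAEResolvent {X : Type*} [NormedAddCommGroup X] [InnerProductSpace ℂ X]
    (E : X →L[ℂ] X) (A : X →ₗ.[ℂ] X) (lam : ℂ) (R : X →L[ℂ] X) : Prop :=
  (∀ z : X, ∃ h : R z ∈ A.domain, lam • E (R z) - A ⟨R z, h⟩ = z) ∧
  (∀ x : A.domain, R (lam • E (x : X) - A x) = (x : X))

/-- for `E` non-negative self-adjoint and `A` dissipative with `(ω,∞) ⊆ ρ(E,A)`,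
there are `K > 0` and `μ > ω` with `‖(λE−A)⁻¹‖ ≤ K λ` for real `λ > μ`:
the resolvent index is at most `2`. -/
theorem stmt_3 {X : Type*} [NormedAddCommGroup X] [InnerProductSpace ℂ X] [CompleteSpace X]
    (E : X →L[ℂ] X) (hEsa : IsSelfAdjoint E)
    (hEnn : ∀ x : X, 0 ≤ (⟪x, E x⟫_ℂ).re)
    (A : X →ₗ.[ℂ] X) (hAclosed : A.IsClosed) (hAdense : Dense (A.domain : Set X))
    (hAdis : ∀ x : A.domain, (⟪(x : X), A x⟫_ℂ).re ≤ 0)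
    (ω : ℝ) (hω : 0 < ω)
    (hres : ∀ lam : ℝ, ω < lam → ∃ R : X →L[ℂ] X, IsDAEResolvent E A (lam : ℂ) R) :
    ∃ K > 0, ∃ μ > ω, ∀ lam : ℝ, μ < lam →
      ∀ R : X →L[ℂ] X, IsDAEResolvent E A (lam : ℂ) R → ‖R‖ ≤ K * lam := by
  obtain ⟨R₀, hR₀⟩ := hres (ω + 1) (by linarith)
  refine ⟨2 * ‖R₀‖ + ‖R₀‖ ^ 2 * ‖E‖ + 1, by positivity, ω + 1, by linarith, ?_⟩
  intro lam hlam R hR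
  have hlam1 : (1 : ℝ) < lam := by linarith
  have hlam0 : (0 : ℝ) < lam := by linarith
  apply ContinuousLinearMap.opNorm_le_bound _ (by positivity)
  intro y
  obtain ⟨hmem, heq⟩ := hR.1 y
  set x := R y with hx
  set r := (⟪x, E x⟫_ℂ).re with hr
  have hr0 : 0 ≤ r := hEnn x
  -- Step 1: dissipativity bound
  have h1 : lam * r ≤ ‖x‖ * ‖y‖ := by
    have hAx := hAdis ⟨x, hmem⟩
    have hinner : ⟪x, y⟫_ℂ = (lam : ℂ) * ⟪x, E x⟫_ℂ - ⟪x, A ⟨x, hmem⟩⟫_ℂ := by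
      rw [← heq, inner_sub_right, inner_smul_right]
    have h2 := congrArg Complex.re hinner
    simp only [Complex.sub_re, Complex.re_ofReal_mul] at h2
    have h3 : (⟪x, y⟫_ℂ).re ≤ ‖x‖ * ‖y‖ := by
      simpa using re_inner_le_norm (𝕜 := ℂ) x y
    simp only [Submodule.coe_mk] at hAx
    linarith
  -- Step 2: Cauchy–Schwarz for the nonneg operator E
  have h2 : ‖E x‖ ^ 2 ≤ ‖E‖ * r := aux_norm_sq_le E hEsa hEnn x
  -- Step 3: express x via the fixed resolvent at ω+1
  have hx0 : R₀ (((ω + 1 : ℝ) : ℂ) • E x - A ⟨x, hmem⟩) = x := hR₀.2 ⟨x, hmem⟩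
  have harg : ((ω + 1 : ℝ) : ℂ) • E x - A ⟨x, hmem⟩
      = y - (((lam - (ω + 1)) : ℝ) : ℂ) • E x := by
    rw [← heq]
    push_cast
    rw [sub_smul]
    abel
  have h3 : ‖x‖ ≤ ‖R₀‖ * (‖y‖ + (lam - (ω + 1)) * ‖E x‖) := by
    have e1 : ‖x‖ = ‖R₀ (y - (((lam - (ω + 1)) : ℝ) : ℂ) • E x)‖ := by
      rw [← harg, hx0]
    rw [e1]
    refine le_trans (R₀.le_opNorm _) (mul_le_mul_of_nonneg_left ?_ (norm_nonneg R₀))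
    refine le_trans (norm_sub_le _ _) ?_
    rw [norm_smul, Complex.norm_real, Real.norm_eq_abs, abs_of_nonneg (by linarith)]
  -- Final arithmetic
  have hc0 : (0 : ℝ) ≤ ‖R₀‖ := norm_nonneg _
  have hM0 : (0 : ℝ) ≤ ‖E‖ := norm_nonneg _
  have he0 : (0 : ℝ) ≤ ‖E x‖ := norm_nonneg _
  have ha0 : (0 : ℝ) ≤ ‖x‖ := norm_nonneg _
  have hb0 : (0 : ℝ) ≤ ‖y‖ := norm_nonneg _
  have q1 : lam ^ 2 * ‖E x‖ ^ 2 ≤ lam ^ 2 * (‖E‖ * r) :=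
    mul_le_mul_of_nonneg_left h2 (sq_nonneg lam)
  have q2 : lam * ‖E‖ * (lam * r) ≤ lam * ‖E‖ * (‖x‖ * ‖y‖) :=
    mul_le_mul_of_nonneg_left h1 (mul_nonneg hlam0.le hM0)
  have g1 : (2 * (‖R₀‖ * lam * ‖E x‖)) ^ 2 ≤ (‖x‖ + ‖R₀‖ ^ 2 * lam * ‖E‖ * ‖y‖) ^ 2 := by
    nlinarith [mul_le_mul_of_nonneg_left q1 (sq_nonneg ‖R₀‖),
      mul_le_mul_of_nonneg_left q2 (sq_nonneg ‖R₀‖),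
      sq_nonneg (‖x‖ - ‖R₀‖ ^ 2 * lam * ‖E‖ * ‖y‖)]
  have g2 : 2 * (‖R₀‖ * lam * ‖E x‖) ≤ ‖x‖ + ‖R₀‖ ^ 2 * lam * ‖E‖ * ‖y‖ :=
    (pow_le_pow_iff_left₀ (by positivity) (by positivity) two_ne_zero).mp g1
  have h4 : ‖x‖ ≤ ‖R₀‖ * ‖y‖ + ‖R₀‖ * lam * ‖E x‖ := by
    nlinarith [h3, mul_nonneg (mul_nonneg hc0 he0) (by linarith : (0:ℝ) ≤ ω + 1)]
  nlinarith [h4, g2, mul_nonneg (mul_nonneg hc0 hb0) (by linarith : (0:ℝ) ≤ lam - 1),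
    mul_nonneg hb0 (by linarith : (0:ℝ) ≤ lam - 1)]
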